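/- Under the same setting and finiteness assumptions, I(J,ρ) - I(-J,ρ) = ∫₀ᵀ J'(t)·log( ρ₊(t)(1-ρ₋(t)) / (ρ₋(t)(1-ρ₊(t))) ) dt, where (-J) denotes replacing J' by -J'. In particular the difference I(J,ρ) - I(-J,ρ) does not depend on ρ. -/

import Mathlib

open MeasureTheory Set

/-- Gallavotti–Cohen type fluctuation relation for the quasi-static rate function:
`I(J,ρ) - I(-J,ρ) = ∫₀ᵀ J'(t) log(ρ₊(t)(1-ρ₋(t))/(ρ₋(t)(1-ρ₊(t)))) dt`;
in particular the difference does not depend on `ρ`. -/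
theorem stmt3 (T : ℝ) (hT : 0 < T) (ρ ρy : ℝ → ℝ → ℝ) (J' ρp ρm : ℝ → ℝ)
    (hρ : ∀ t ∈ Icc 0 T, ∀ y ∈ Icc (-1:ℝ) 1, ρ t y ∈ Ioo (0:ℝ) 1)
    (hbpm : ∀ t ∈ Icc 0 T, ρp t ∈ Ioo (0:ℝ) 1 ∧ ρm t ∈ Ioo (0:ℝ) 1)
    (hd : ∀ t ∈ Icc 0 T, ∀ y ∈ Icc (-1:ℝ) 1, HasDerivAt (ρ t) (ρy t y) y)
    (hbm : ∀ t ∈ Icc 0 T, ρ t (-1) = ρm t) (hbp : ∀ t ∈ Icc 0 T, ρ t 1 = ρp t)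
    (hi1 : ∀ t ∈ Icc 0 T, IntegrableOn
      (fun y => (J' t + ρy t y)^2 / (ρ t y * (1 - ρ t y))) (Icc (-1:ℝ) 1))
    (hi1' : ∀ t ∈ Icc 0 T, IntegrableOn
      (fun y => (-J' t + ρy t y)^2 / (ρ t y * (1 - ρ t y))) (Icc (-1:ℝ) 1))
    (ho1 : IntegrableOn
      (fun t => ∫ y in Icc (-1:ℝ) 1, (J' t + ρy t y)^2 / (ρ t y * (1 - ρ t y))) (Icc 0 T))
    (ho1' : IntegrableOn
      (fun t => ∫ y in Icc (-1:ℝ) 1, (-J' t + ρy t y)^2 / (ρ t y * (1 - ρ t y))) (Icc 0 T))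
    (ho3 : IntegrableOn
      (fun t => J' t * Real.log (ρp t * (1 - ρm t) / (ρm t * (1 - ρp t)))) (Icc 0 T)) :
    (1/4) * (∫ t in Icc 0 T, ∫ y in Icc (-1:ℝ) 1, (J' t + ρy t y)^2 / (ρ t y * (1 - ρ t y)))
      - (1/4) * (∫ t in Icc 0 T, ∫ y in Icc (-1:ℝ) 1, (-J' t + ρy t y)^2 / (ρ t y * (1 - ρ t y)))
      = ∫ t in Icc 0 T, J' t * Real.log (ρp t * (1 - ρm t) / (ρm t * (1 - ρp t))) := by
  have key : ∀ t ∈ Icc 0 T,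
      (∫ y in Icc (-1:ℝ) 1, (J' t + ρy t y)^2 / (ρ t y * (1 - ρ t y)))
        - (∫ y in Icc (-1:ℝ) 1, (-J' t + ρy t y)^2 / (ρ t y * (1 - ρ t y)))
      = 4 * (J' t * Real.log (ρp t * (1 - ρm t) / (ρm t * (1 - ρp t)))) := by
    intro t ht
    obtain ⟨hp, hm⟩ := hbpm t ht
    by_cases hJ : J' t = 0
    · simp [hJ]
    -- pointwise algebra
    have halg : ∀ y : ℝ,
        (J' t + ρy t y)^2 / (ρ t y * (1 - ρ t y))
          - (-J' t + ρy t y)^2 / (ρ t y * (1 - ρ t y))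
        = 4 * J' t * (ρy t y / (ρ t y * (1 - ρ t y))) := by
      intro y
      rw [div_sub_div_same, ← mul_div_assoc]
      congr 1
      ring
    -- integrability of g
    have hg : IntegrableOn (fun y => ρy t y / (ρ t y * (1 - ρ t y))) (Icc (-1:ℝ) 1) := by
      have h := ((hi1 t ht).sub (hi1' t ht)).const_mul (4 * J' t)⁻¹
      refine h.congr (Filter.Eventually.of_forall fun y => ?_)
      simp only [Pi.sub_apply]
      rw [halg y]
      field_simp
    -- FTC
    have hftc : (∫ y in Icc (-1:ℝ) 1, ρy t y / (ρ t y * (1 - ρ t y)))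
        = (Real.log (ρp t) - Real.log (1 - ρp t))
          - (Real.log (ρm t) - Real.log (1 - ρm t)) := by
      have hF : ∀ y ∈ uIcc (-1:ℝ) 1,
          HasDerivAt (fun y => Real.log (ρ t y) - Real.log (1 - ρ t y))
            (ρy t y / (ρ t y * (1 - ρ t y))) y := by
        intro y hy
        rw [uIcc_of_le (by norm_num)] at hy
        obtain ⟨h0, h1⟩ := hρ t ht y hy
        have hD := hd t ht y hy
        have h1' : (1:ℝ) - ρ t y ≠ 0 := by linarith
        have := (hD.log (ne_of_gt h0)).sub (((hasDerivAt_const y (1:ℝ)).sub hD).log h1')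
        refine this.congr_deriv ?_
        have h0' : ρ t y ≠ 0 := ne_of_gt h0
        simp only [Pi.sub_apply]
        rw [zero_sub, neg_div, sub_neg_eq_add, div_add_div _ _ h0' h1']
        ring
      have hii : IntervalIntegrable (fun y => ρy t y / (ρ t y * (1 - ρ t y)))
          volume (-1) 1 := by
        apply IntegrableOn.intervalIntegrable
        rwa [uIcc_of_le (by norm_num : (-1:ℝ) ≤ 1)]
      have := intervalIntegral.integral_eq_sub_of_hasDerivAt hF hii
      rw [intervalIntegral.integral_of_le (by norm_num : (-1:ℝ) ≤ 1)] at this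
      rw [MeasureTheory.integral_Icc_eq_integral_Ioc, this, hbp t ht, hbm t ht]
    -- combine
    have hsub : (∫ y in Icc (-1:ℝ) 1, (J' t + ρy t y)^2 / (ρ t y * (1 - ρ t y)))
        - (∫ y in Icc (-1:ℝ) 1, (-J' t + ρy t y)^2 / (ρ t y * (1 - ρ t y)))
        = ∫ y in Icc (-1:ℝ) 1, 4 * J' t * (ρy t y / (ρ t y * (1 - ρ t y))) := by
      rw [← integral_sub (hi1 t ht) (hi1' t ht)]
      exact integral_congr_ae (Filter.Eventually.of_forall fun y => halg y)
    rw [hsub, integral_const_mul, hftc]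
    have hlog : Real.log (ρp t * (1 - ρm t) / (ρm t * (1 - ρp t)))
        = (Real.log (ρp t) - Real.log (1 - ρp t))
          - (Real.log (ρm t) - Real.log (1 - ρm t)) := by
      rw [Real.log_div (ne_of_gt (mul_pos hp.1 (by linarith [hm.2])))
          (ne_of_gt (mul_pos hm.1 (by linarith [hp.2]))),
        Real.log_mul (ne_of_gt hp.1) (by linarith [hm.2] : (1:ℝ) - ρm t ≠ 0),
        Real.log_mul (ne_of_gt hm.1) (by linarith [hp.2] : (1:ℝ) - ρp t ≠ 0)]
      ring
    rw [hlog]; ring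
  have h4 : (1/4 : ℝ) * (∫ t in Icc 0 T, ∫ y in Icc (-1:ℝ) 1,
        (J' t + ρy t y)^2 / (ρ t y * (1 - ρ t y)))
      - (1/4) * (∫ t in Icc 0 T, ∫ y in Icc (-1:ℝ) 1,
        (-J' t + ρy t y)^2 / (ρ t y * (1 - ρ t y)))
      = (1/4) * ∫ t in Icc 0 T,
        ((∫ y in Icc (-1:ℝ) 1, (J' t + ρy t y)^2 / (ρ t y * (1 - ρ t y)))
          - ∫ y in Icc (-1:ℝ) 1, (-J' t + ρy t y)^2 / (ρ t y * (1 - ρ t y))) := by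
    rw [integral_sub ho1 ho1']; ring
  rw [h4, setIntegral_congr_fun measurableSet_Icc key, integral_const_mul]
  ring
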